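/- arXiv:1304.0157 — 4 statements merged into one kernel-verified Lean document; each statement's English description precedes it below -/
import Mathlib

section
/- Let m < M be real numbers, let J be an interval containing [m, M], and let f : J → ℝ be a continuous convex function. Let Φ_1,…,Φ_n be positive linear maps on B(H) with Σ_{i=1}^n Φ_i(I) = I, and let A_i, D_i ∈ σ(J) (i = 1,…,n) satisfy A_i ≤ m·I ≤ (A_i + D_i)/2 ≤ M·I ≤ D_i for each i. Then Σ_i Φ_i(f((A_i + D_i)/2)) ≤ (1/2)·[ f(Σ_i Φ_i(A_i)) + f(Σ_i Φ_i(D_i)) ] − δ_f · X̃ ≤ (1/2)·[ f(Σ_i Φ_i(A_i)) + f(Σ_i Φ_i(D_i)) ], where X̃ = (1/2)·I − (1/(M−m))·Σ_i Φ_i(|(A_i + D_i)/2 − ((m+M)/2)·I|). -/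
set_option maxHeartbeats 1000000
set_option synthInstance.maxHeartbeats 1000000

section Scalar

lemma scalar_upper {m M : ℝ} (hmM : m < M) {J : Set ℝ} (hJmM : Set.Icc m M ⊆ J)
    {f : ℝ → ℝ} (hconv : ConvexOn ℝ J f) {x : ℝ} (hx : x ∈ Set.Icc m M) :
    f x ≤ (f M - f m)/(M-m) * x + (M * f m - m * f M)/(M-m)
      - (f m + f M - 2 * f ((m+M)/2)) * (1/2 - |x - (m+M)/2|/(M-m)) := by
  have hMm : (0:ℝ) < M - m := by linarith
  have hne : M - m ≠ 0 := by linarith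
  have hm : m ∈ J := hJmM ⟨le_refl m, hmM.le⟩
  have hM : M ∈ J := hJmM ⟨hmM.le, le_refl M⟩
  have hμ : (m+M)/2 ∈ J := hJmM ⟨by linarith, by linarith⟩
  have hμm : (m+M)/2 - m ≠ 0 := by linarith
  have hMμ : M - (m+M)/2 ≠ 0 := by linarith
  have e1 : -m + M ≠ 0 := by intro hh; apply hne; linarith
  have e2 : -(m*2) + M*2 ≠ 0 := by intro hh; apply hne; linarith
  have e3 : M*2 - m*2 ≠ 0 := by intro hh; apply hne; linarith
  have e4 : m + M - 2*m ≠ 0 := by intro hh; apply hne; linarith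
  have e5 : M*2 - (m+M) ≠ 0 := by intro hh; apply hne; linarith
  obtain ⟨hx1, hx2⟩ := hx
  rcases le_total x ((m+M)/2) with h | h
  · have key : f (((m+M)/2 - x)/((m+M)/2 - m) * m + (x-m)/((m+M)/2 - m) * ((m+M)/2)) ≤
        ((m+M)/2 - x)/((m+M)/2 - m) * f m + (x-m)/((m+M)/2 - m) * f ((m+M)/2) :=
      hconv.2 hm hμ (div_nonneg (by linarith) (by linarith))
        (div_nonneg (by linarith) (by linarith)) (by rw [← add_div, div_eq_one_iff_eq hμm]; ring)
    have hc : ((m+M)/2 - x)/((m+M)/2 - m) * m + (x-m)/((m+M)/2 - m) * ((m+M)/2) = x := by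
      rw [div_mul_eq_mul_div, div_mul_eq_mul_div, ← add_div, div_eq_iff hμm]; ring
    rw [hc] at key
    rw [abs_of_nonpos (by linarith)]
    have heq : ((m+M)/2 - x)/((m+M)/2 - m) * f m + (x-m)/((m+M)/2 - m) * f ((m+M)/2)
        = (f M - f m)/(M-m) * x + (M * f m - m * f M)/(M-m)
          - (f m + f M - 2 * f ((m+M)/2)) * (1/2 - (-(x - (m+M)/2))/(M-m)) := by
      rw [show (m+M)/2 - m = (M-m)/2 by ring]
      field_simp
      ring
    linarith [key, heq.ge]
  · have key : f ((M - x)/(M - (m+M)/2) * ((m+M)/2) + (x-(m+M)/2)/(M - (m+M)/2) * M) ≤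
        (M - x)/(M - (m+M)/2) * f ((m+M)/2) + (x-(m+M)/2)/(M - (m+M)/2) * f M :=
      hconv.2 hμ hM (div_nonneg (by linarith) (by linarith))
        (div_nonneg (by linarith) (by linarith)) (by field_simp [hMμ, hne, e1, e2, e3, e4, e5]; try ring)
    have hc : (M - x)/(M - (m+M)/2) * ((m+M)/2) + (x-(m+M)/2)/(M - (m+M)/2) * M = x := by
      field_simp [hMμ, hne, e1, e2, e3, e4, e5]; ring
    rw [hc] at key
    rw [abs_of_nonneg (by linarith)]
    have heq : (M - x)/(M - (m+M)/2) * f ((m+M)/2) + (x-(m+M)/2)/(M - (m+M)/2) * f M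
        = (f M - f m)/(M-m) * x + (M * f m - m * f M)/(M-m)
          - (f m + f M - 2 * f ((m+M)/2)) * (1/2 - (x - (m+M)/2)/(M-m)) := by
      field_simp [hMμ, hne, e1, e2, e3, e4, e5]
      ring
    linarith [key, heq.ge]

lemma scalar_lower {m M : ℝ} (hmM : m < M) {J : Set ℝ} {f : ℝ → ℝ} (hconv : ConvexOn ℝ J f)
    (hm : m ∈ J) (hM : M ∈ J) {x : ℝ} (hxJ : x ∈ J) (hx : x ≤ m ∨ M ≤ x) :
    (f M - f m)/(M-m) * x + (M * f m - m * f M)/(M-m) ≤ f x := by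
  have hMm : (0:ℝ) < M - m := by linarith
  rw [div_mul_eq_mul_div, ← add_div, div_le_iff₀ hMm]
  rcases hx with h | h
  · have hMx : (0:ℝ) < M - x := by linarith
    have hMxne : M - x ≠ 0 := by linarith
    have key : f ((M-m)/(M-x) * x + (m-x)/(M-x) * M) ≤
        (M-m)/(M-x) * f x + (m-x)/(M-x) * f M :=
      hconv.2 hxJ hM (div_nonneg (by linarith) (by linarith))
        (div_nonneg (by linarith) (by linarith)) (by field_simp [hMxne]; ring)
    have hc : (M-m)/(M-x) * x + (m-x)/(M-x) * M = m := by field_simp [hMxne]; ring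
    rw [hc] at key
    have key' : f m * (M - x) ≤ (M-m) * f x + (m-x) * f M := by
      have h2 := mul_le_mul_of_nonneg_right key hMx.le
      calc f m * (M-x) ≤ ((M-m)/(M-x) * f x + (m-x)/(M-x) * f M) * (M-x) := h2
        _ = (M-m) * f x + (m-x) * f M := by field_simp [hMxne]
    nlinarith [key']
  · have hxm : (0:ℝ) < x - m := by linarith
    have hxmne : x - m ≠ 0 := by linarith
    have key : f ((x-M)/(x-m) * m + (M-m)/(x-m) * x) ≤
        (x-M)/(x-m) * f m + (M-m)/(x-m) * f x :=
      hconv.2 hm hxJ (div_nonneg (by linarith) (by linarith))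
        (div_nonneg (by linarith) (by linarith)) (by field_simp [hxmne]; ring)
    have hc : (x-M)/(x-m) * m + (M-m)/(x-m) * x = M := by field_simp [hxmne]; ring
    rw [hc] at key
    have key' : f M * (x - m) ≤ (x-M) * f m + (M-m) * f x := by
      have h2 := mul_le_mul_of_nonneg_right key hxm.le
      calc f M * (x-m) ≤ ((x-M)/(x-m) * f m + (M-m)/(x-m) * f x) * (x-m) := h2
        _ = (x-M) * f m + (M-m) * f x := by field_simp [hxmne]
    nlinarith [key']

end Scalar

/-- The absolute value of a (self-adjoint) bounded operator, via the
continuous functional calculus. -/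
noncomputable def opAbs {H : Type*} [NormedAddCommGroup H] [InnerProductSpace ℂ H]
    [CompleteSpace H] (A : H →L[ℂ] H) : H →L[ℂ] H :=
  cfc (fun t : ℝ => |t|) A

section Op

set_option maxHeartbeats 1000000

variable {H : Type*} [NormedAddCommGroup H] [InnerProductSpace ℂ H] [CompleteSpace H]

lemma smul_mono_op (c : ℝ) (hc : 0 ≤ c) {x y : H →L[ℂ] H} (h : x ≤ y) : c • x ≤ c • y := by
  have h2 := smul_nonneg hc (sub_nonneg.mpr h)
  rwa [smul_sub, sub_nonneg] at h2

lemma smul_le_smul_one {a b : ℝ} (h : a ≤ b) : a • (1 : H →L[ℂ] H) ≤ b • 1 := by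
  have h2 : (0:H →L[ℂ] H) ≤ (b - a) • (1 : H →L[ℂ] H) :=
    smul_nonneg (sub_nonneg.mpr h) zero_le_one
  rwa [sub_smul, sub_nonneg] at h2

lemma cfc_affine (c d : ℝ) (T : H →L[ℂ] H) (hT : IsSelfAdjoint T) :
    cfc (fun x : ℝ => c * x + d) T = c • T + d • 1 := by
  rw [cfc_add .., cfc_const_mul_id .., cfc_const .., Algebra.algebraMap_eq_smul_one]

lemma cfc_abs_sub (T : H →L[ℂ] H) (hT : IsSelfAdjoint T) (μ : ℝ) :
    cfc (fun x : ℝ => |x - μ|) T = opAbs (T - μ • 1) := by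
  have h1 : cfc (fun x : ℝ => x - μ) T = T - μ • 1 := by
    rw [cfc_sub (fun x : ℝ => x) (fun _ : ℝ => μ) T, cfc_id' ℝ T, cfc_const _ _,
      Algebra.algebraMap_eq_smul_one]
  rw [show opAbs (T - μ • 1) = cfc (fun t : ℝ => |t|) (T - μ • 1) from rfl, ← h1,
    ← cfc_comp' (fun t : ℝ => |t|) (fun x : ℝ => x - μ) T]

lemma spec_subset_Icc (T : H →L[ℂ] H) (hT : IsSelfAdjoint T) {a b : ℝ}
    (h1 : a • 1 ≤ T) (h2 : T ≤ b • 1) : spectrum ℝ T ⊆ Set.Icc a b := by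
  intro x hx
  rw [← Algebra.algebraMap_eq_smul_one] at h1 h2
  exact ⟨(algebraMap_le_iff_le_spectrum (a := T) hT).mp h1 x hx,
    (le_algebraMap_iff_spectrum_le (a := T) hT).mp h2 x hx⟩

lemma spec_le_of_le {T : H →L[ℂ] H} (hT : IsSelfAdjoint T) {b : ℝ}
    (h2 : T ≤ b • 1) : ∀ x ∈ spectrum ℝ T, x ≤ b := by
  rw [← Algebra.algebraMap_eq_smul_one] at h2
  exact (le_algebraMap_iff_spectrum_le (a := T) hT).mp h2

lemma le_spec_of_le {T : H →L[ℂ] H} (hT : IsSelfAdjoint T) {a : ℝ}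
    (h1 : a • 1 ≤ T) : ∀ x ∈ spectrum ℝ T, a ≤ x := by
  rw [← Algebra.algebraMap_eq_smul_one] at h1
  exact (algebraMap_le_iff_le_spectrum (a := T) hT).mp h1

end Op

/-- converse Jensen-type inequality (3.3) of the paper. -/
theorem jensen_converse_refined {H : Type*} [NormedAddCommGroup H] [InnerProductSpace ℂ H]
    [CompleteSpace H] {n : ℕ} (m M : ℝ) (hmM : m < M) (J : Set ℝ) (hJ : J.OrdConnected)
    (hJmM : Set.Icc m M ⊆ J) (f : ℝ → ℝ) (hf : ContinuousOn f J) (hconv : ConvexOn ℝ J f)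
    (Φ : Fin n → (H →L[ℂ] H) →ₗ[ℂ] (H →L[ℂ] H))
    (hΦpos : ∀ i, ∀ T : H →L[ℂ] H, 0 ≤ T → 0 ≤ Φ i T)
    (hΦ1 : ∑ i, Φ i 1 = (1 : H →L[ℂ] H))
    (A D : Fin n → H →L[ℂ] H)
    (hAsa : ∀ i, IsSelfAdjoint (A i)) (hAspec : ∀ i, spectrum ℝ (A i) ⊆ J)
    (hDsa : ∀ i, IsSelfAdjoint (D i)) (hDspec : ∀ i, spectrum ℝ (D i) ⊆ J)
    (hA : ∀ i, A i ≤ m • 1) (hmid₁ : ∀ i, m • 1 ≤ (2 : ℝ)⁻¹ • (A i + D i))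
    (hmid₂ : ∀ i, (2 : ℝ)⁻¹ • (A i + D i) ≤ M • 1) (hD : ∀ i, M • 1 ≤ D i) :
    ∑ i, Φ i (cfc f ((2 : ℝ)⁻¹ • (A i + D i))) ≤
        (2 : ℝ)⁻¹ • (cfc f (∑ i, Φ i (A i)) + cfc f (∑ i, Φ i (D i))) -
          (f m + f M - 2 * f ((m + M) / 2)) •
            ((1 / 2 : ℝ) • (1 : H →L[ℂ] H) -
              (M - m)⁻¹ •
                ∑ i, Φ i (opAbs ((2 : ℝ)⁻¹ • (A i + D i) - ((m + M) / 2) • 1))) ∧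
      (2 : ℝ)⁻¹ • (cfc f (∑ i, Φ i (A i)) + cfc f (∑ i, Φ i (D i))) -
          (f m + f M - 2 * f ((m + M) / 2)) •
            ((1 / 2 : ℝ) • (1 : H →L[ℂ] H) -
              (M - m)⁻¹ •
                ∑ i, Φ i (opAbs ((2 : ℝ)⁻¹ • (A i + D i) - ((m + M) / 2) • 1))) ≤
        (2 : ℝ)⁻¹ • (cfc f (∑ i, Φ i (A i)) + cfc f (∑ i, Φ i (D i))) := by
  classical
  by_cases htriv : Subsingleton (H →L[ℂ] H)
  · exact ⟨le_of_eq (Subsingleton.elim _ _), le_of_eq (Subsingleton.elim _ _)⟩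
  haveI hnt : Nontrivial (H →L[ℂ] H) := not_subsingleton_iff_nontrivial.mp htriv
  have hMm : (0:ℝ) < M - m := by linarith
  have hm : m ∈ J := hJmM ⟨le_refl m, hmM.le⟩
  have hM : M ∈ J := hJmM ⟨hmM.le, le_refl M⟩
  set μ : ℝ := (m+M)/2 with hμdef
  set α : ℝ := (f M - f m)/(M-m) with hαdef
  set β : ℝ := (M * f m - m * f M)/(M-m) with hβdef
  set δ : ℝ := f m + f M - 2 * f μ with hδdef
  have hδ0 : 0 ≤ δ := by
    have key : f ((1/2:ℝ) * m + (1/2:ℝ) * M) ≤ (1/2:ℝ) * f m + (1/2:ℝ) * f M :=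
      hconv.2 hm hM (by norm_num) (by norm_num) (by norm_num)
    rw [show (1/2:ℝ)*m + (1/2:ℝ)*M = μ by rw [hμdef]; ring] at key
    rw [hδdef]; linarith
  have hCsa : ∀ i, IsSelfAdjoint ((2:ℝ)⁻¹ • (A i + D i)) := fun i => by
    rw [IsSelfAdjoint, star_smul, star_trivial, star_add, (hAsa i).star_eq, (hDsa i).star_eq]
  have hCspec : ∀ i, spectrum ℝ ((2:ℝ)⁻¹ • (A i + D i)) ⊆ Set.Icc m M :=
    fun i => spec_subset_Icc _ (hCsa i) (hmid₁ i) (hmid₂ i)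
  have hmono : ∀ i (S T : H →L[ℂ] H), S ≤ T → Φ i S ≤ Φ i T := fun i S T h => by
    have h2 := hΦpos i (T - S) (sub_nonneg.mpr h)
    rw [map_sub] at h2
    exact sub_nonneg.mp h2
  have hsmulΦ : ∀ i (r : ℝ) (T : H →L[ℂ] H), Φ i (r • T) = r • Φ i T := fun i r T =>
    ((Φ i).restrictScalars ℝ).map_smul r T
  have hconstΦ : ∀ r : ℝ, ∑ i, Φ i (r • 1) = r • (1 : H →L[ℂ] H) := fun r => by
    simp_rw [hsmulΦ]; rw [← Finset.smul_sum, hΦ1]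
  -- step 1 : pointwise cfc inequality
  have step1 : ∀ i, cfc f ((2:ℝ)⁻¹ • (A i + D i)) ≤
      α • ((2:ℝ)⁻¹ • (A i + D i)) + β • 1 -
        δ • ((1/2:ℝ) • (1 : H →L[ℂ] H) -
          (M-m)⁻¹ • opAbs ((2:ℝ)⁻¹ • (A i + D i) - μ • 1)) := by
    intro i
    have hsa := hCsa i
    have hsp := hCspec i
    have hfC : ContinuousOn f (spectrum ℝ ((2:ℝ)⁻¹ • (A i + D i))) := hf.mono (hsp.trans hJmM)
    have hg : Continuous (fun x : ℝ => α * x + β - δ * (1/2 - (M-m)⁻¹ * |x - μ|)) := by fun_prop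
    have h1 : cfc f ((2:ℝ)⁻¹ • (A i + D i)) ≤
        cfc (fun x : ℝ => α * x + β - δ * (1/2 - (M-m)⁻¹ * |x - μ|)) ((2:ℝ)⁻¹ • (A i + D i)) := by
      rw [cfc_le_iff f _ _ hfC hg.continuousOn hsa]
      intro x hx
      have h3 := scalar_upper hmM hJmM hconv (hsp hx)
      rw [← hμdef, ← hαdef, ← hβdef, ← hδdef, div_eq_inv_mul (|x - μ|)] at h3
      exact h3
    have habs : cfc (fun x : ℝ => |x - μ|) ((2:ℝ)⁻¹ • (A i + D i)) =
        opAbs ((2:ℝ)⁻¹ • (A i + D i) - μ • 1) := cfc_abs_sub _ hsa μ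
    have h2 : cfc (fun x : ℝ => α * x + β - δ * (1/2 - (M-m)⁻¹ * |x - μ|)) ((2:ℝ)⁻¹ • (A i + D i))
        = α • ((2:ℝ)⁻¹ • (A i + D i)) + β • 1 -
          δ • ((1/2:ℝ) • (1 : H →L[ℂ] H) -
            (M-m)⁻¹ • opAbs ((2:ℝ)⁻¹ • (A i + D i) - μ • 1)) := by
      rw [cfc_sub (fun x : ℝ => α * x + β) (fun x : ℝ => δ * (1/2 - (M-m)⁻¹ * |x - μ|)) _
          (by fun_prop) (by fun_prop),
        cfc_affine α β _ hsa,
        cfc_const_mul δ (fun x : ℝ => 1/2 - (M-m)⁻¹ * |x - μ|) _ (by fun_prop),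
        cfc_sub (fun _ : ℝ => (1/2:ℝ)) (fun x : ℝ => (M-m)⁻¹ * |x - μ|) _
          (by fun_prop) (by fun_prop),
        cfc_const _ _ hsa, cfc_const_mul _ (fun x : ℝ => |x - μ|) _ (by fun_prop),
        habs, Algebra.algebraMap_eq_smul_one]
    rw [h2] at h1
    exact h1
  -- summation
  have sum1 : ∑ i, Φ i (cfc f ((2:ℝ)⁻¹ • (A i + D i))) ≤
      ∑ i, Φ i (α • ((2:ℝ)⁻¹ • (A i + D i)) + β • 1 -
        δ • ((1/2:ℝ) • (1 : H →L[ℂ] H) -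
          (M-m)⁻¹ • opAbs ((2:ℝ)⁻¹ • (A i + D i) - μ • 1))) :=
    Finset.sum_le_sum fun i _ => hmono i _ _ (step1 i)
  have sum2 : ∑ i, Φ i (α • ((2:ℝ)⁻¹ • (A i + D i)) + β • 1 -
        δ • ((1/2:ℝ) • (1 : H →L[ℂ] H) -
          (M-m)⁻¹ • opAbs ((2:ℝ)⁻¹ • (A i + D i) - μ • 1)))
      = α • (∑ i, Φ i ((2:ℝ)⁻¹ • (A i + D i))) + β • 1 -
        δ • ((1/2:ℝ) • (1 : H →L[ℂ] H) -
          (M-m)⁻¹ • ∑ i, Φ i (opAbs ((2:ℝ)⁻¹ • (A i + D i) - μ • 1))) := by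
    have e : ∀ i, Φ i (α • ((2:ℝ)⁻¹ • (A i + D i)) + β • 1 -
        δ • ((1/2:ℝ) • (1 : H →L[ℂ] H) -
          (M-m)⁻¹ • opAbs ((2:ℝ)⁻¹ • (A i + D i) - μ • 1)))
        = α • Φ i ((2:ℝ)⁻¹ • (A i + D i)) + β • Φ i 1 -
          δ • ((1/2:ℝ) • Φ i 1 - (M-m)⁻¹ • Φ i (opAbs ((2:ℝ)⁻¹ • (A i + D i) - μ • 1))) := by
      intro i
      simp only [map_sub, map_add, hsmulΦ]
    rw [Finset.sum_congr rfl fun i _ => e i]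
    simp only [Finset.sum_sub_distrib, Finset.sum_add_distrib, ← Finset.smul_sum]
    rw [hΦ1]
  have sumC : ∑ i, Φ i ((2:ℝ)⁻¹ • (A i + D i)) =
      (2:ℝ)⁻¹ • (∑ i, Φ i (A i) + ∑ i, Φ i (D i)) := by
    have e : ∀ i, Φ i ((2:ℝ)⁻¹ • (A i + D i)) = (2:ℝ)⁻¹ • (Φ i (A i) + Φ i (D i)) := by
      intro i; rw [hsmulΦ, map_add]
    rw [Finset.sum_congr rfl fun i _ => e i, ← Finset.smul_sum, Finset.sum_add_distrib]
  set P := ∑ i, Φ i (A i) with hPdef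
  set Q := ∑ i, Φ i (D i) with hQdef
  have hPm : P ≤ m • 1 := by
    rw [hPdef, ← hconstΦ m]
    exact Finset.sum_le_sum fun i _ => hmono i _ _ (hA i)
  have hQM : M • 1 ≤ Q := by
    rw [hQdef, ← hconstΦ M]
    exact Finset.sum_le_sum fun i _ => hmono i _ _ (hD i)
  haveI hn : Nonempty (Fin n) := by
    rcases Nat.eq_zero_or_pos n with h0 | h0
    · subst h0; simp at hΦ1
    · exact ⟨⟨0, h0⟩⟩
  -- lower bound for P
  have hAlow : ∀ i, sInf (spectrum ℝ (A i)) • (1 : H →L[ℂ] H) ≤ A i := fun i => by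
    rw [← Algebra.algebraMap_eq_smul_one]
    exact (algebraMap_le_iff_le_spectrum (a := A i) (hAsa i)).mpr
      fun x hx => csInf_le (spectrum.isCompact (A i)).bddBelow hx
  have hsInfmem : ∀ i, sInf (spectrum ℝ (A i)) ∈ spectrum ℝ (A i) := fun i =>
    (spectrum.isCompact (A i)).sInf_mem ((hAsa i).spectrum_nonempty)
  obtain ⟨a, haJ, haA⟩ : ∃ a : ℝ, a ∈ J ∧ ∀ i, a ≤ sInf (spectrum ℝ (A i)) := by
    refine ⟨Finset.univ.inf' Finset.univ_nonempty (fun i => sInf (spectrum ℝ (A i))), ?_, ?_⟩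
    · obtain ⟨i0, -, h⟩ := Finset.exists_mem_eq_inf' (Finset.univ_nonempty)
        (fun i => sInf (spectrum ℝ (A i)))
      rw [h]; exact hAspec i0 (hsInfmem i0)
    · exact fun i => Finset.inf'_le (fun i => sInf (spectrum ℝ (A i))) (Finset.mem_univ i)
  have haP : a • 1 ≤ P := by
    rw [hPdef, ← hconstΦ a]
    refine Finset.sum_le_sum fun i _ => hmono i _ _ ?_
    exact le_trans (smul_le_smul_one (haA i)) (hAlow i)
  have hPsa : IsSelfAdjoint P := by
    have h0 : IsSelfAdjoint (P - a • 1) := IsSelfAdjoint.of_nonneg (sub_nonneg.mpr haP)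
    have h1 : IsSelfAdjoint ((a:ℝ) • (1 : H →L[ℂ] H)) := by
      rw [IsSelfAdjoint, star_smul, star_trivial, star_one]
    simpa using h0.add h1
  have hPspec : spectrum ℝ P ⊆ J := (spec_subset_Icc P hPsa haP hPm).trans (hJ.out haJ hm)
  have hPf : α • P + β • 1 ≤ cfc f P := by
    rw [← cfc_affine α β P hPsa,
      cfc_le_iff _ f P (by fun_prop) (hf.mono hPspec) hPsa]
    intro x hx
    have h3 := scalar_lower hmM hconv hm hM (hPspec hx) (Or.inl (spec_le_of_le hPsa hPm x hx))
    rwa [← hαdef, ← hβdef] at h3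
  -- upper bound for Q
  have hDhigh : ∀ i, D i ≤ sSup (spectrum ℝ (D i)) • (1 : H →L[ℂ] H) := fun i => by
    rw [← Algebra.algebraMap_eq_smul_one]
    exact (le_algebraMap_iff_spectrum_le (a := D i) (hDsa i)).mpr
      fun x hx => le_csSup (spectrum.isCompact (D i)).bddAbove hx
  have hsSupmem : ∀ i, sSup (spectrum ℝ (D i)) ∈ spectrum ℝ (D i) := fun i =>
    (spectrum.isCompact (D i)).sSup_mem ((hDsa i).spectrum_nonempty)
  obtain ⟨b, hbJ, hbD⟩ : ∃ b : ℝ, b ∈ J ∧ ∀ i, sSup (spectrum ℝ (D i)) ≤ b := by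
    refine ⟨Finset.univ.sup' Finset.univ_nonempty (fun i => sSup (spectrum ℝ (D i))), ?_, ?_⟩
    · obtain ⟨i0, -, h⟩ := Finset.exists_mem_eq_sup' (Finset.univ_nonempty)
        (fun i => sSup (spectrum ℝ (D i)))
      rw [h]; exact hDspec i0 (hsSupmem i0)
    · exact fun i => Finset.le_sup' (fun i => sSup (spectrum ℝ (D i))) (Finset.mem_univ i)
  have hbQ : Q ≤ b • 1 := by
    rw [hQdef, ← hconstΦ b]
    refine Finset.sum_le_sum fun i _ => hmono i _ _ ?_
    exact le_trans (hDhigh i) (smul_le_smul_one (hbD i))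
  have hQsa : IsSelfAdjoint Q := by
    have h0 : IsSelfAdjoint (Q - M • 1) := IsSelfAdjoint.of_nonneg (sub_nonneg.mpr hQM)
    have h1 : IsSelfAdjoint ((M:ℝ) • (1 : H →L[ℂ] H)) := by
      rw [IsSelfAdjoint, star_smul, star_trivial, star_one]
    simpa using h0.add h1
  have hQspec : spectrum ℝ Q ⊆ J := (spec_subset_Icc Q hQsa hQM hbQ).trans (hJ.out hM hbJ)
  have hQf : α • Q + β • 1 ≤ cfc f Q := by
    rw [← cfc_affine α β Q hQsa,
      cfc_le_iff _ f Q (by fun_prop) (hf.mono hQspec) hQsa]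
    intro x hx
    have h3 := scalar_lower hmM hconv hm hM (hQspec hx) (Or.inr (le_spec_of_le hQsa hQM x hx))
    rwa [← hαdef, ← hβdef] at h3
  -- step 3
  have comb : α • (∑ i, Φ i ((2:ℝ)⁻¹ • (A i + D i))) + β • 1 ≤
      (2:ℝ)⁻¹ • (cfc f P + cfc f Q) := by
    rw [sumC]
    have h1 : α • ((2:ℝ)⁻¹ • (P + Q)) + β • (1 : H →L[ℂ] H)
        = (2:ℝ)⁻¹ • ((α • P + β • 1) + (α • Q + β • 1)) := by module
    rw [h1]
    exact smul_mono_op _ (by norm_num) (add_le_add hPf hQf)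
  -- first inequality
  have first : ∑ i, Φ i (cfc f ((2:ℝ)⁻¹ • (A i + D i))) ≤
      (2:ℝ)⁻¹ • (cfc f P + cfc f Q) -
        δ • ((1/2:ℝ) • (1 : H →L[ℂ] H) -
          (M-m)⁻¹ • ∑ i, Φ i (opAbs ((2:ℝ)⁻¹ • (A i + D i) - μ • 1))) := by
    refine le_trans (le_trans sum1 (le_of_eq sum2)) ?_
    exact sub_le_sub_right comb _
  -- positivity of the correction term
  have habs_le : ∀ i, opAbs ((2:ℝ)⁻¹ • (A i + D i) - μ • 1) ≤ ((M-m)/2) • 1 := fun i => by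
    have h1 : cfc (fun x : ℝ => |x - μ|) ((2:ℝ)⁻¹ • (A i + D i)) ≤
        cfc (fun _ : ℝ => (M-m)/2) ((2:ℝ)⁻¹ • (A i + D i)) := by
      rw [cfc_le_iff _ _ _ (by fun_prop) (by fun_prop) (hCsa i)]
      intro x hx
      obtain ⟨hx1, hx2⟩ := hCspec i hx
      rw [abs_le, hμdef]; constructor <;> [linarith; linarith]
    rwa [cfc_abs_sub _ (hCsa i) μ, cfc_const _ _ (hCsa i),
      Algebra.algebraMap_eq_smul_one] at h1
  have hXpos : (0 : H →L[ℂ] H) ≤ (1/2:ℝ) • (1 : H →L[ℂ] H) -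
      (M-m)⁻¹ • ∑ i, Φ i (opAbs ((2:ℝ)⁻¹ • (A i + D i) - μ • 1)) := by
    rw [sub_nonneg]
    have h1 : ∑ i, Φ i (opAbs ((2:ℝ)⁻¹ • (A i + D i) - μ • 1)) ≤ ((M-m)/2) • 1 := by
      rw [← hconstΦ ((M-m)/2)]
      exact Finset.sum_le_sum fun i _ => hmono i _ _ (habs_le i)
    have h2 := smul_mono_op (M-m)⁻¹ (by positivity) h1
    rwa [smul_smul, show (M-m)⁻¹ * ((M-m)/2) = 1/2 by field_simp] at h2
  have second : (2:ℝ)⁻¹ • (cfc f P + cfc f Q) -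
      δ • ((1/2:ℝ) • (1 : H →L[ℂ] H) -
        (M-m)⁻¹ • ∑ i, Φ i (opAbs ((2:ℝ)⁻¹ • (A i + D i) - μ • 1))) ≤
      (2:ℝ)⁻¹ • (cfc f P + cfc f Q) :=
    sub_le_self _ (smul_nonneg hδ0 hXpos)
  exact ⟨first, second⟩
end

section
/- Let f : [0, ∞) → ℝ be a continuous convex function with f(0) ≤ 0, let M > 0 be a scalar, and let C_1,…,C_n be positive operators in B(H) with 0 ≤ C_i ≤ M·I for each i and M·I ≤ Σ_{i=1}^n C_i. Then Σ_i f(C_i) ≤ f(Σ_i C_i) − δ_f · Σ_i C̃_i ≤ f(Σ_i C_i), where δ_f = f(0) + f(M) − 2 f(M/2) and C̃_i = (1/2)·I − |(1/M)·C_i − (1/2)·I|. -/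
set_option maxHeartbeats 1000000
set_option synthInstance.maxHeartbeats 400000

/-- Scalar refinement of convexity on `[0, M]`. -/
private lemma scalar_key {f : ℝ → ℝ} (hconv : ConvexOn ℝ (Set.Ici 0) f) (hf0 : f 0 ≤ 0)
    {M t : ℝ} (hM : 0 < M) (ht0 : 0 ≤ t) (htM : t ≤ M) :
    f t + (f 0 + f M - 2 * f (M / 2)) * (1 / 2 - |M⁻¹ * t - 1 / 2|) ≤ f M / M * t := by
  have hMne : M ≠ 0 := hM.ne'
  set l : ℝ := M⁻¹ * t with hl
  have hl0 : 0 ≤ l := mul_nonneg (inv_nonneg.mpr hM.le) ht0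
  have hl1 : l ≤ 1 := by
    rw [hl]
    calc M⁻¹ * t ≤ M⁻¹ * M := mul_le_mul_of_nonneg_left htM (inv_nonneg.mpr hM.le)
    _ = 1 := inv_mul_cancel₀ hMne
  have htl : t = l * M := by rw [hl]; field_simp
  have hrhs : f M / M * t = l * f M := by rw [htl, hl]; field_simp
  have hhalf : (M : ℝ)/2 ∈ Set.Ici (0:ℝ) := Set.mem_Ici.mpr (by positivity)
  have h0m : (0 : ℝ) ∈ Set.Ici (0:ℝ) := Set.self_mem_Ici
  have hMm : M ∈ Set.Ici (0:ℝ) := Set.mem_Ici.mpr hM.le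
  have key : f t ≤ (1 - l) * f 0 + l * f M
      - (f 0 + f M - 2 * f (M / 2)) * (1 / 2 - |l - 1 / 2|) := by
    rcases le_or_gt l (1/2) with h | h
    · have habs : |l - 1/2| = 1/2 - l := by rw [abs_of_nonpos (by linarith)]; ring
      have hcv := hconv.2 h0m hhalf (show (0:ℝ) ≤ 1 - 2*l by linarith)
        (show (0:ℝ) ≤ 2*l by linarith) (show (1 - 2*l) + 2*l = 1 by ring)
      simp only [smul_eq_mul] at hcv
      have harg : (1 - 2*l) * 0 + 2*l * (M/2) = t := by rw [htl]; ring
      rw [harg] at hcv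
      rw [habs]
      linarith
    · have habs : |l - 1/2| = l - 1/2 := abs_of_pos (by linarith)
      have hcv := hconv.2 hhalf hMm (show (0:ℝ) ≤ 2 - 2*l by linarith)
        (show (0:ℝ) ≤ 2*l - 1 by linarith) (show (2 - 2*l) + (2*l - 1) = 1 by ring)
      simp only [smul_eq_mul] at hcv
      have harg : (2 - 2*l) * (M/2) + (2*l - 1) * M = t := by rw [htl]; ring
      rw [harg] at hcv
      rw [habs]
      linarith
  have hnl : (1 - l) * f 0 ≤ 0 := mul_nonpos_of_nonneg_of_nonpos (by linarith) hf0
  rw [hrhs]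
  linarith [key]

/-- Scalar lower bound: `f` superlinear past `M`. -/
private lemma scalar_key2 {f : ℝ → ℝ} (hconv : ConvexOn ℝ (Set.Ici 0) f) (hf0 : f 0 ≤ 0)
    {M x : ℝ} (hM : 0 < M) (hx : M ≤ x) : f M / M * x ≤ f x := by
  have hx0 : 0 < x := hM.trans_le hx
  set μ : ℝ := M / x with hμ
  have hμ0 : 0 ≤ μ := by positivity
  have hμ1 : μ ≤ 1 := by rw [hμ, div_le_one hx0]; exact hx
  have hμx : μ * x = M := by rw [hμ]; field_simp
  have hcv := hconv.2 (Set.self_mem_Ici : (0:ℝ) ∈ Set.Ici 0)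
    (Set.mem_Ici.mpr hx0.le : x ∈ Set.Ici 0) (show (0:ℝ) ≤ 1 - μ by linarith)
    hμ0 (show (1 - μ) + μ = 1 by ring)
  simp only [smul_eq_mul] at hcv
  have harg : (1 - μ) * 0 + μ * x = M := by rw [hμx]; ring
  rw [harg] at hcv
  have h1 : (1 - μ) * f 0 ≤ 0 := mul_nonpos_of_nonneg_of_nonpos (by linarith) hf0
  have h2 : f M ≤ μ * f x := by linarith
  have h3 : f M * x ≤ μ * f x * x := mul_le_mul_of_nonneg_right h2 hx0.le
  have h4 : μ * f x * x = M * f x := by rw [mul_comm μ (f x), mul_assoc, hμx, mul_comm]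
  rw [div_mul_eq_mul_div, div_le_iff₀ hM]
  rw [h4] at h3
  linarith

/-- Theorem 3.5 of the paper: refined superadditivity. -/
theorem superadditive_refined {H : Type*} [NormedAddCommGroup H] [InnerProductSpace ℂ H]
    [CompleteSpace H] {n : ℕ} (f : ℝ → ℝ) (hf : ContinuousOn f (Set.Ici 0))
    (hconv : ConvexOn ℝ (Set.Ici 0) f) (hf0 : f 0 ≤ 0) (M : ℝ) (hM : 0 < M)
    (C : Fin n → H →L[ℂ] H) (hCpos : ∀ i, 0 ≤ C i) (hCu : ∀ i, C i ≤ M • 1)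
    (hCsum : M • (1 : H →L[ℂ] H) ≤ ∑ i, C i) :
    ∑ i, cfc f (C i) ≤
        cfc f (∑ i, C i) -
          (f 0 + f M - 2 * f (M / 2)) •
            ∑ i,
              ((1 / 2 : ℝ) • (1 : H →L[ℂ] H) -
                opAbs (M⁻¹ • C i - (1 / 2 : ℝ) • 1)) ∧
      cfc f (∑ i, C i) -
          (f 0 + f M - 2 * f (M / 2)) •
            ∑ i,
              ((1 / 2 : ℝ) • (1 : H →L[ℂ] H) -
                opAbs (M⁻¹ • C i - (1 / 2 : ℝ) • 1)) ≤
        cfc f (∑ i, C i) := by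
  classical
  have hCsa : ∀ i, IsSelfAdjoint (C i) := fun i => .of_nonneg (hCpos i)
  have hSpos : (0 : H →L[ℂ] H) ≤ ∑ i, C i := Finset.sum_nonneg fun i _ => hCpos i
  have hSsa : IsSelfAdjoint (∑ i, C i) := .of_nonneg hSpos
  have hspec : ∀ i, ∀ x ∈ spectrum ℝ (C i), 0 ≤ x ∧ x ≤ M := by
    intro i x hx
    refine ⟨spectrum_nonneg_of_nonneg (hCpos i) hx, ?_⟩
    refine (le_algebraMap_iff_spectrum_le (R := ℝ) (a := C i) (hCsa i)).mp ?_ x hx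
    rw [Algebra.algebraMap_eq_smul_one]; exact hCu i
  have hspecIci : ∀ i, spectrum ℝ (C i) ⊆ Set.Ici 0 := fun i x hx => (hspec i x hx).1
  have hSspec : ∀ x ∈ spectrum ℝ (∑ i, C i), M ≤ x := by
    intro x hx
    refine (algebraMap_le_iff_le_spectrum (R := ℝ) (a := ∑ i, C i) hSsa).mp ?_ x hx
    rw [Algebra.algebraMap_eq_smul_one]; exact hCsum
  have hSIci : spectrum ℝ (∑ i, C i) ⊆ Set.Ici 0 := fun x hx => hM.le.trans (hSspec x hx)
  -- the tilde operators as cfc of g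
  have hT : ∀ i, (1 / 2 : ℝ) • (1 : H →L[ℂ] H) - opAbs (M⁻¹ • C i - (1 / 2 : ℝ) • 1)
      = cfc (fun t : ℝ => 1 / 2 - |M⁻¹ * t - 1 / 2|) (C i) := by
    intro i
    have h1 : M⁻¹ • C i - (1 / 2 : ℝ) • (1 : H →L[ℂ] H)
        = cfc (fun t : ℝ => M⁻¹ * t - 1 / 2) (C i) := by
      rw [cfc_sub (fun t : ℝ => M⁻¹ * t) (fun _ : ℝ => (1 / 2 : ℝ)) (C i)
        (by fun_prop) (by fun_prop), cfc_const_mul_id M⁻¹ (C i) (hCsa i),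
        cfc_const (1 / 2 : ℝ) (C i) (hCsa i), Algebra.algebraMap_eq_smul_one]
    rw [h1, opAbs,
      ← cfc_comp' (fun t : ℝ => |t|) (fun t : ℝ => M⁻¹ * t - 1 / 2) (C i)
        (by fun_prop) (by fun_prop) (hCsa i),
      cfc_sub (fun _ : ℝ => (1 / 2 : ℝ)) (fun t : ℝ => |M⁻¹ * t - 1 / 2|) (C i)
        (by fun_prop) (by fun_prop),
      cfc_const (1 / 2 : ℝ) (C i) (hCsa i), Algebra.algebraMap_eq_smul_one]
  -- nonnegativity of g on the spectrum
  have hg_nonneg : ∀ i, ∀ x ∈ spectrum ℝ (C i), (0:ℝ) ≤ 1 / 2 - |M⁻¹ * x - 1 / 2| := by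
    intro i x hx
    obtain ⟨hx0, hxM⟩ := hspec i x hx
    have h1 : 0 ≤ M⁻¹ * x := mul_nonneg (inv_nonneg.mpr hM.le) hx0
    have h2 : M⁻¹ * x ≤ 1 := by
      calc M⁻¹ * x ≤ M⁻¹ * M := mul_le_mul_of_nonneg_left hxM (inv_nonneg.mpr hM.le)
      _ = 1 := inv_mul_cancel₀ hM.ne'
    have : |M⁻¹ * x - 1 / 2| ≤ 1 / 2 := abs_le.mpr ⟨by linarith, by linarith⟩
    linarith
  -- per-index inequality
  have step1 : ∀ i, cfc f (C i)
      + (f 0 + f M - 2 * f (M / 2)) • cfc (fun t : ℝ => 1 / 2 - |M⁻¹ * t - 1 / 2|) (C i)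
      ≤ (f M / M) • C i := by
    intro i
    rw [← cfc_const_mul (f 0 + f M - 2 * f (M / 2))
        (fun t : ℝ => 1 / 2 - |M⁻¹ * t - 1 / 2|) (C i) (by fun_prop),
      ← cfc_add (C i) f _ (hf.mono (hspecIci i)) (by fun_prop),
      ← cfc_const_mul_id (f M / M) (C i) (hCsa i)]
    refine cfc_mono (fun x hx => ?_) ?_ (by fun_prop)
    · obtain ⟨hx0, hxM⟩ := hspec i x hx
      exact scalar_key hconv hf0 hM hx0 hxM
    · exact (hf.mono (hspecIci i)).add (by fun_prop)
  -- δ ≥ 0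
  have hδ : 0 ≤ f 0 + f M - 2 * f (M / 2) := by
    have hcv := hconv.2 (Set.self_mem_Ici : (0:ℝ) ∈ Set.Ici 0)
      (Set.mem_Ici.mpr hM.le : M ∈ Set.Ici 0) (show (0:ℝ) ≤ 1/2 by norm_num)
      (show (0:ℝ) ≤ 1/2 by norm_num) (show (1/2 : ℝ) + 1/2 = 1 by norm_num)
    simp only [smul_eq_mul] at hcv
    have harg : (1/2 : ℝ) * 0 + (1/2 : ℝ) * M = M / 2 := by ring
    rw [harg] at hcv
    linarith
  -- main chain
  have step2 : ∑ i, cfc f (C i)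
      + (f 0 + f M - 2 * f (M / 2)) •
        ∑ i, cfc (fun t : ℝ => 1 / 2 - |M⁻¹ * t - 1 / 2|) (C i)
      ≤ (f M / M) • ∑ i, C i := by
    rw [Finset.smul_sum, ← Finset.sum_add_distrib, Finset.smul_sum]
    exact Finset.sum_le_sum fun i _ => step1 i
  have step3 : (f M / M) • (∑ i, C i) ≤ cfc f (∑ i, C i) := by
    rw [← cfc_const_mul_id (f M / M) (∑ i, C i) hSsa]
    exact cfc_mono (fun x hx => scalar_key2 hconv hf0 hM (hSspec x hx))
      (by fun_prop) (hf.mono hSIci)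
  have hTsum_nonneg : (0 : H →L[ℂ] H) ≤ (f 0 + f M - 2 * f (M / 2)) •
      ∑ i, cfc (fun t : ℝ => 1 / 2 - |M⁻¹ * t - 1 / 2|) (C i) := by
    rw [Finset.smul_sum]
    refine Finset.sum_nonneg fun i _ => ?_
    rw [← cfc_const_mul (f 0 + f M - 2 * f (M / 2))
        (fun t : ℝ => 1 / 2 - |M⁻¹ * t - 1 / 2|) (C i) (by fun_prop)]
    exact cfc_nonneg fun x hx => mul_nonneg hδ (hg_nonneg i x hx)
  simp only [hT]
  constructor
  · rw [le_sub_iff_add_le]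
    exact step2.trans step3
  · exact sub_le_self _ hTsum_nonneg
end

section
/- Let m < M be real numbers, let J be an interval containing [m, M], and let f : J → ℝ be a continuous convex function. Let A, B, C, D ∈ σ(J) satisfy A ≤ m·I, m·I ≤ B ≤ M·I, m·I ≤ C ≤ M·I and M·I ≤ D. If either (i) B + C ≤ A + D and f(m) ≤ f(M), or (ii) A + D ≤ B + C and f(M) ≤ f(m), then f(B) + f(C) ≤ f(A) + f(D) − δ_f · X̃ ≤ f(A) + f(D), where X̃ = I − (1/(M−m))·( |B − ((M+m)/2)·I| + |C − ((M+m)/2)·I| ). -/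
set_option maxHeartbeats 1000000
set_option synthInstance.maxHeartbeats 200000

section Aux

variable {H : Type*} [NormedAddCommGroup H] [InnerProductSpace ℂ H] [CompleteSpace H]

lemma aux_opAbs_eq (T : H →L[ℂ] H) (hT : IsSelfAdjoint T) (c : ℝ) :
    opAbs (T - c • 1) = cfc (fun t : ℝ => |t - c|) T := by
  have h1 : T - c • 1 = cfc (fun t : ℝ => t - c) T := by
    rw [cfc_sub _ _ T (by fun_prop) (by fun_prop), cfc_id' ℝ T, cfc_const c T hT,
      Algebra.algebraMap_eq_smul_one]
  rw [opAbs, h1, ← cfc_comp' (fun t : ℝ => |t|) (fun t : ℝ => t - c) T (by fun_prop) (by fun_prop)]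

lemma aux_smul_nonneg {r : ℝ} (hr : 0 ≤ r) {P : H →L[ℂ] H} (hP : 0 ≤ P) : 0 ≤ r • P := by
  have h := star_left_conjugate_nonneg hP (((Real.sqrt r : ℝ) : ℂ) • (1 : H →L[ℂ] H))
  rw [star_smul, star_one, Complex.star_def, Complex.conj_ofReal, smul_mul_assoc, smul_mul_assoc,
    one_mul, mul_smul_comm, mul_one, smul_smul, ← Complex.ofReal_mul, Real.mul_self_sqrt hr] at h
  rwa [← Complex.coe_algebraMap, algebraMap_smul] at h

lemma aux_smul_mono {r : ℝ} (hr : 0 ≤ r) {T S : H →L[ℂ] H} (h : T ≤ S) : r • T ≤ r • S := by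
  rw [← sub_nonneg, ← smul_sub]
  exact aux_smul_nonneg hr (sub_nonneg.2 h)

lemma aux_cfc_affine (a k : ℝ) (T : H →L[ℂ] H) (hT : IsSelfAdjoint T) :
    cfc (fun t : ℝ => a + k * t) T = a • (1 : H →L[ℂ] H) + k • T := by
  rw [cfc_add T (fun _ => a) (fun t => k * t) (by fun_prop) (by fun_prop), cfc_const a T hT,
    cfc_const_mul_id k T hT, Algebra.algebraMap_eq_smul_one]

end Aux

lemma aux_chord_le {J : Set ℝ} {f : ℝ → ℝ} (hconv : ConvexOn ℝ J f) {x y t : ℝ}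
    (hx : x ∈ J) (hy : y ∈ J) (hxy : x < y) (ht1 : x ≤ t) (ht2 : t ≤ y) :
    f t ≤ ((y - t) * f x + (t - x) * f y) / (y - x) := by
  have hyx : (0 : ℝ) < y - x := by linarith
  have h := hconv.2 hx hy
    (div_nonneg (by linarith : (0:ℝ) ≤ y - t) hyx.le)
    (div_nonneg (by linarith : (0:ℝ) ≤ t - x) hyx.le)
    (by field_simp; ring : (y - t) / (y - x) + (t - x) / (y - x) = 1)
  have harg : ((y - t) / (y - x)) • x + ((t - x) / (y - x)) • y = t := by
    simp only [smul_eq_mul]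
    field_simp
    ring
  rw [harg] at h
  calc f t ≤ ((y - t) / (y - x)) • f x + ((t - x) / (y - x)) • f y := h
    _ = ((y - t) * f x + (t - x) * f y) / (y - x) := by
        simp only [smul_eq_mul]; ring

lemma aux_line_le {J : Set ℝ} {f : ℝ → ℝ} (hconv : ConvexOn ℝ J f) {x y t : ℝ}
    (hx : x ∈ J) (hy : y ∈ J) (ht : t ∈ J) (hxy : x < y) (h : t ≤ x ∨ y ≤ t) :
    f x + (f y - f x) / (y - x) * (t - x) ≤ f t := by
  have hyx : (0 : ℝ) < y - x := by linarith
  have hfr : f x + (f y - f x) / (y - x) * (t - x)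
      = (f x * (y - t) + f y * (t - x)) / (y - x) := by
    field_simp
    ring
  rcases h with h1 | h1
  · rcases eq_or_lt_of_le h1 with rfl | h1
    · simp
    · have hch := aux_chord_le hconv ht hy (h1.trans hxy) h1.le (by linarith)
      have hyt : (0 : ℝ) < y - t := by linarith
      rw [le_div_iff₀ hyt] at hch
      rw [hfr, div_le_iff₀ hyx]
      nlinarith [hch]
  · rcases eq_or_lt_of_le h1 with rfl | h1
    · rw [hfr, div_le_iff₀ hyx]
      ring_nf
      exact le_rfl
    · have hch := aux_chord_le hconv hx ht (hxy.trans h1) (by linarith) h1.le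
      have htx : (0 : ℝ) < t - x := by linarith
      rw [le_div_iff₀ htx] at hch
      rw [hfr, div_le_iff₀ hyx]
      nlinarith [hch]

lemma aux_upper {m M : ℝ} (hmM : m < M) {J : Set ℝ} (hJmM : Set.Icc m M ⊆ J)
    {f : ℝ → ℝ} (hconv : ConvexOn ℝ J f) {t : ℝ} (ht1 : m ≤ t) (ht2 : t ≤ M) :
    f t ≤ ((f m - (f M - f m) / (M - m) * m) - (f m + f M - 2 * f ((M + m) / 2)) / 2)
      + (f M - f m) / (M - m) * t
      + ((f m + f M - 2 * f ((M + m) / 2)) / (M - m)) * |t - (M + m) / 2| := by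
  have hm : m ∈ J := hJmM ⟨le_rfl, hmM.le⟩
  have hM : M ∈ J := hJmM ⟨hmM.le, le_rfl⟩
  have hcJ : (M + m) / 2 ∈ J := hJmM ⟨by linarith, by linarith⟩
  have hmc : m < (M + m) / 2 := by linarith
  have hcM : (M + m) / 2 < M := by linarith
  have hMm : (0 : ℝ) < M - m := by linarith
  rcases le_total t ((M + m) / 2) with h | h
  · have hch := aux_chord_le hconv hm hcJ hmc ht1 h
    have habs : |t - (M + m) / 2| = (M + m) / 2 - t := by
      rw [abs_of_nonpos (by linarith), neg_sub]
    rw [habs]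
    refine hch.trans (le_of_eq ?_)
    have hne : (M + m) / 2 - m ≠ 0 := by intro hh; nlinarith
    have h2 : M - m ≠ 0 := hMm.ne'
    rw [div_eq_iff hne]
    field_simp
    ring
  · have hch := aux_chord_le hconv hcJ hM hcM h ht2
    have habs : |t - (M + m) / 2| = t - (M + m) / 2 := abs_of_nonneg (by linarith)
    rw [habs]
    refine hch.trans (le_of_eq ?_)
    have hne : M - (M + m) / 2 ≠ 0 := by intro hh; nlinarith
    have h2 : M - m ≠ 0 := hMm.ne'
    rw [div_eq_iff hne]
    field_simp
    ring

/-- Theorem 3.7, convex case. -/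
theorem jensen_type_without_sum_condition {H : Type*} [NormedAddCommGroup H]
    [InnerProductSpace ℂ H] [CompleteSpace H] (m M : ℝ) (hmM : m < M) (J : Set ℝ)
    (hJ : J.OrdConnected) (hJmM : Set.Icc m M ⊆ J) (f : ℝ → ℝ)
    (hf : ContinuousOn f J) (hconv : ConvexOn ℝ J f)
    (A B C D : H →L[ℂ] H)
    (hAsa : IsSelfAdjoint A) (hAspec : spectrum ℝ A ⊆ J)
    (hBsa : IsSelfAdjoint B) (hBspec : spectrum ℝ B ⊆ J)
    (hCsa : IsSelfAdjoint C) (hCspec : spectrum ℝ C ⊆ J)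
    (hDsa : IsSelfAdjoint D) (hDspec : spectrum ℝ D ⊆ J)
    (hA : A ≤ m • 1) (hBl : m • 1 ≤ B) (hBu : B ≤ M • 1)
    (hCl : m • 1 ≤ C) (hCu : C ≤ M • 1) (hD : M • 1 ≤ D)
    (hcond : (B + C ≤ A + D ∧ f m ≤ f M) ∨ (A + D ≤ B + C ∧ f M ≤ f m)) :
    cfc f B + cfc f C ≤
        cfc f A + cfc f D -
          (f m + f M - 2 * f ((m + M) / 2)) •
            ((1 : H →L[ℂ] H) -
              (M - m)⁻¹ •
                (opAbs (B - ((M + m) / 2) • 1) + opAbs (C - ((M + m) / 2) • 1))) ∧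
      cfc f A + cfc f D -
          (f m + f M - 2 * f ((m + M) / 2)) •
            ((1 : H →L[ℂ] H) -
              (M - m)⁻¹ •
                (opAbs (B - ((M + m) / 2) • 1) + opAbs (C - ((M + m) / 2) • 1))) ≤
        cfc f A + cfc f D := by
  have hMm : (0 : ℝ) < M - m := by linarith
  have hm : m ∈ J := hJmM ⟨le_rfl, hmM.le⟩
  have hM : M ∈ J := hJmM ⟨hmM.le, le_rfl⟩
  have hcJ : (M + m) / 2 ∈ J := hJmM ⟨by linarith, by linarith⟩
  have harg : (m + M) / 2 = (M + m) / 2 := by ring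
  rw [harg]
  set c : ℝ := (M + m) / 2 with hc
  set φ : ℝ → ℝ := fun t => |t - c| with hφ
  have hφcont : Continuous φ := by fun_prop
  set δ : ℝ := f m + f M - 2 * f c with hδ
  set k : ℝ := (f M - f m) / (M - m) with hk
  set γ : ℝ := f m - k * m with hγ
  set β : ℝ := δ / (M - m) with hβ
  -- δ ≥ 0
  have hδ0 : 0 ≤ δ := by
    have h := hconv.2 hm hM (by norm_num : (0:ℝ) ≤ 1/2) (by norm_num : (0:ℝ) ≤ 1/2)
      (by norm_num : (1:ℝ)/2 + 1/2 = 1)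
    have : ((1:ℝ)/2) • m + ((1:ℝ)/2) • M = c := by
      simp only [smul_eq_mul, hc]; ring
    rw [this] at h
    simp only [smul_eq_mul] at h
    rw [hδ]; linarith
  -- spectra
  have hBIcc : ∀ x ∈ spectrum ℝ B, m ≤ x ∧ x ≤ M := by
    rw [← Algebra.algebraMap_eq_smul_one] at hBl hBu
    intro x hx
    exact ⟨(algebraMap_le_iff_le_spectrum (a := B) hBsa).mp hBl x hx,
      (le_algebraMap_iff_spectrum_le (a := B) hBsa).mp hBu x hx⟩
  have hCIcc : ∀ x ∈ spectrum ℝ C, m ≤ x ∧ x ≤ M := by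
    rw [← Algebra.algebraMap_eq_smul_one] at hCl hCu
    intro x hx
    exact ⟨(algebraMap_le_iff_le_spectrum (a := C) hCsa).mp hCl x hx,
      (le_algebraMap_iff_spectrum_le (a := C) hCsa).mp hCu x hx⟩
  have hAle : ∀ x ∈ spectrum ℝ A, x ≤ m := by
    rw [← Algebra.algebraMap_eq_smul_one] at hA
    exact (le_algebraMap_iff_spectrum_le (a := A) hAsa).mp hA
  have hDge : ∀ x ∈ spectrum ℝ D, M ≤ x := by
    rw [← Algebra.algebraMap_eq_smul_one] at hD
    exact (algebraMap_le_iff_le_spectrum (a := D) hDsa).mp hD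
  -- opAbs identifications
  have hopB : opAbs (B - c • 1) = cfc φ B := aux_opAbs_eq B hBsa c
  have hopC : opAbs (C - c • 1) = cfc φ C := aux_opAbs_eq C hCsa c
  -- bound on cfc φ
  have hφB : cfc φ B ≤ ((M - m) / 2) • (1 : H →L[ℂ] H) := by
    rw [← Algebra.algebraMap_eq_smul_one]
    refine cfc_le_algebraMap φ ((M - m) / 2) B (fun x hx => ?_) hφcont.continuousOn hBsa
    obtain ⟨h1, h2⟩ := hBIcc x hx
    rw [hφ]
    rw [abs_le]
    constructor <;> [skip; skip] <;> rw [hc] <;> [linarith; linarith]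
  have hφC : cfc φ C ≤ ((M - m) / 2) • (1 : H →L[ℂ] H) := by
    rw [← Algebra.algebraMap_eq_smul_one]
    refine cfc_le_algebraMap φ ((M - m) / 2) C (fun x hx => ?_) hφcont.continuousOn hCsa
    obtain ⟨h1, h2⟩ := hCIcc x hx
    rw [hφ, abs_le]
    constructor <;> rw [hc] <;> [linarith; linarith]
  -- nonnegativity of X
  set X : H →L[ℂ] H := (1 : H →L[ℂ] H) - (M - m)⁻¹ • (cfc φ B + cfc φ C) with hX
  have hX0 : (0 : H →L[ℂ] H) ≤ X := by
    rw [hX, sub_nonneg]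
    have hsum : cfc φ B + cfc φ C ≤ (M - m) • (1 : H →L[ℂ] H) := by
      have := add_le_add hφB hφC
      rwa [← add_smul, add_halves] at this
    have h2 := aux_smul_mono (r := (M - m)⁻¹) (by positivity) hsum
    rw [smul_smul, inv_mul_cancel₀ hMm.ne'] at h2
    simpa using h2
  have hδX : (0 : H →L[ℂ] H) ≤ δ • X := aux_smul_nonneg hδ0 hX0
  -- second inequality
  have hsecond : cfc f A + cfc f D - δ • X ≤ cfc f A + cfc f D := by
    have := sub_le_self (cfc f A + cfc f D) hδX
    exact this
  -- upper bounds for f on B and C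
  have hBup : cfc f B ≤ (γ - δ / 2) • (1 : H →L[ℂ] H) + k • B + β • cfc φ B := by
    have h1 : cfc f B ≤ cfc (fun t : ℝ => ((γ - δ / 2) + k * t) + β * φ t) B := by
      refine cfc_mono (fun x hx => ?_) (hf.mono hBspec) (by fun_prop)
      obtain ⟨hxl, hxu⟩ := hBIcc x hx
      have := aux_upper hmM hJmM hconv hxl hxu
      simp only [hγ, hδ, hk, hβ, hφ, hc]
      linarith [this]
    refine h1.trans (le_of_eq ?_)
    rw [cfc_add B (fun t => (γ - δ / 2) + k * t) (fun t => β * φ t) (by fun_prop) (by fun_prop),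
      aux_cfc_affine (γ - δ / 2) k B hBsa, cfc_const_mul β φ B hφcont.continuousOn]
  have hCup : cfc f C ≤ (γ - δ / 2) • (1 : H →L[ℂ] H) + k • C + β • cfc φ C := by
    have h1 : cfc f C ≤ cfc (fun t : ℝ => ((γ - δ / 2) + k * t) + β * φ t) C := by
      refine cfc_mono (fun x hx => ?_) (hf.mono hCspec) (by fun_prop)
      obtain ⟨hxl, hxu⟩ := hCIcc x hx
      have := aux_upper hmM hJmM hconv hxl hxu
      simp only [hγ, hδ, hk, hβ, hφ, hc]
      linarith [this]
    refine h1.trans (le_of_eq ?_)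
    rw [cfc_add C (fun t => (γ - δ / 2) + k * t) (fun t => β * φ t) (by fun_prop) (by fun_prop),
      aux_cfc_affine (γ - δ / 2) k C hCsa, cfc_const_mul β φ C hφcont.continuousOn]
  -- lower bounds for f on A and D
  have hAlow : γ • (1 : H →L[ℂ] H) + k • A ≤ cfc f A := by
    have h1 : cfc (fun t : ℝ => γ + k * t) A ≤ cfc f A := by
      refine cfc_mono (fun x hx => ?_) (by fun_prop) (hf.mono hAspec)
      have := aux_line_le hconv hm hM (hAspec hx) hmM (Or.inl (hAle x hx))
      rw [hγ, hk]
      linarith [this]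
    rwa [aux_cfc_affine γ k A hAsa] at h1
  have hDlow : γ • (1 : H →L[ℂ] H) + k • D ≤ cfc f D := by
    have h1 : cfc (fun t : ℝ => γ + k * t) D ≤ cfc f D := by
      refine cfc_mono (fun x hx => ?_) (by fun_prop) (hf.mono hDspec)
      have := aux_line_le hconv hm hM (hDspec hx) hmM (Or.inr (hDge x hx))
      rw [hγ, hk]
      linarith [this]
    rwa [aux_cfc_affine γ k D hDsa] at h1
  -- the slope comparison
  have hkBC : k • (B + C) ≤ k • (A + D) := by
    rcases hcond with ⟨hop, hfm⟩ | ⟨hop, hfm⟩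
    · exact aux_smul_mono (by rw [hk]; exact div_nonneg (by linarith) hMm.le) hop
    · have hk0 : k ≤ 0 := by
        rw [hk]
        apply div_nonpos_of_nonpos_of_nonneg <;> linarith
      have h' := aux_smul_mono (r := -k) (by linarith) hop
      rw [neg_smul, neg_smul] at h'
      exact neg_le_neg_iff.mp h'
  -- rewrite δ • X decomposition
  have hδXeq : δ • X = δ • (1 : H →L[ℂ] H) - β • cfc φ B - β • cfc φ C := by
    rw [hX, smul_sub, smul_smul, smul_add, hβ, div_eq_mul_inv]
    abel
  -- first inequality
  have hfirst : cfc f B + cfc f C ≤ cfc f A + cfc f D - δ • X := by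
    have step1 : cfc f B + cfc f C ≤
        ((γ - δ / 2) • (1 : H →L[ℂ] H) + k • B + β • cfc φ B)
          + ((γ - δ / 2) • (1 : H →L[ℂ] H) + k • C + β • cfc φ C) := add_le_add hBup hCup
    have step2 : ((γ - δ / 2) • (1 : H →L[ℂ] H) + k • B + β • cfc φ B)
          + ((γ - δ / 2) • (1 : H →L[ℂ] H) + k • C + β • cfc φ C)
        ≤ (γ • (1 : H →L[ℂ] H) + k • A) + (γ • (1 : H →L[ℂ] H) + k • D) - δ • X := by
      rw [← sub_nonneg, hδXeq]
      have hdiff : (γ • (1 : H →L[ℂ] H) + k • A) + (γ • (1 : H →L[ℂ] H) + k • D)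
            - (δ • (1 : H →L[ℂ] H) - β • cfc φ B - β • cfc φ C)
            - (((γ - δ / 2) • (1 : H →L[ℂ] H) + k • B + β • cfc φ B)
              + ((γ - δ / 2) • (1 : H →L[ℂ] H) + k • C + β • cfc φ C))
          = k • (A + D) - k • (B + C) := by
        module
      rw [hdiff, sub_nonneg]
      exact hkBC
    have step3 : (γ • (1 : H →L[ℂ] H) + k • A) + (γ • (1 : H →L[ℂ] H) + k • D) - δ • X
        ≤ cfc f A + cfc f D - δ • X :=
      sub_le_sub_right (add_le_add hAlow hDlow) _
    exact step1.trans (step2.trans step3)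
  rw [hopB, hopC, ← hX]
  exact ⟨hfirst, hsecond⟩
end

section
/- Let m < M be real numbers and let A, B, C, D be self-adjoint operators in B(H) with I ≤ A ≤ m·I, m·I ≤ B ≤ M·I, m·I ≤ C ≤ M·I and M·I ≤ D. Let p, q be real numbers with q ≥ p, and suppose either (i) B + C ≤ A + D and p ≥ 1, or (ii) A + D ≤ B + C and p ≤ 0. Then B^p + C^p ≤ A^q + D^q − δ_p · X̃ ≤ A^q + D^q, where δ_p = m^p + M^p − 2·((m+M)/2)^p, X̃ = I − (1/(M−m))·( |B − ((M+m)/2)·I| + |C − ((M+m)/2)·I| ), and the real powers of these positive invertible operators are defined by the continuous functional calculus. -/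
set_option maxHeartbeats 2000000
set_option synthInstance.maxHeartbeats 1000000

open Set

/-- The real power `A^r` of a (positive invertible) bounded operator, via the
continuous functional calculus applied to `t ↦ t ^ r`. -/
noncomputable def opPow {H : Type*} [NormedAddCommGroup H] [InnerProductSpace ℂ H]
    [CompleteSpace H] (A : H →L[ℂ] H) (r : ℝ) : H →L[ℂ] H :=
  cfc (fun t : ℝ => t ^ r) A


lemma chord_upper {s : Set ℝ} {f : ℝ → ℝ} (hf : ConvexOn ℝ s f) {u v t : ℝ}
    (hu : u ∈ s) (hv : v ∈ s) (huv : u < v) (ht1 : u ≤ t) (ht2 : t ≤ v) :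
    (v - u) * f t ≤ (v - t) * f u + (t - u) * f v := by
  have he : (0:ℝ) < v - u := by linarith
  have h1 : ((v - t)/(v-u)) • u + ((t - u)/(v-u)) • v = t := by
    simp only [smul_eq_mul, div_mul_eq_mul_div, ← add_div]
    rw [div_eq_iff he.ne']
    ring
  have h2 : f (((v - t)/(v-u)) • u + ((t - u)/(v-u)) • v)
      ≤ ((v - t)/(v-u)) • f u + ((t - u)/(v-u)) • f v :=
    hf.2 hu hv (div_nonneg (by linarith) he.le) (div_nonneg (by linarith) he.le)
      (by rw [← add_div, div_eq_one_iff_eq he.ne']; ring)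
  rw [h1] at h2
  simp only [smul_eq_mul] at h2
  have h3 := mul_le_mul_of_nonneg_left h2 he.le
  have h4 : (v-u) * ((v - t)/(v-u) * f u + (t - u)/(v-u) * f v)
      = (v-t) * f u + (t-u) * f v := by first | (field_simp; ring) | field_simp
  rw [h4] at h3
  exact h3

lemma chord_lower {s : Set ℝ} {f : ℝ → ℝ} (hf : ConvexOn ℝ s f) {u v t : ℝ}
    (hu : u ∈ s) (hv : v ∈ s) (ht : t ∈ s) (huv : u < v) (h : t ≤ u ∨ v ≤ t) :
    (v - t) * f u + (t - u) * f v ≤ (v - u) * f t := by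
  rcases h with h | h
  · rcases eq_or_lt_of_le h with rfl | h'
    · linarith
    · have hsec := hf.secant_mono hu ht hv (ne_of_lt h') huv.ne' (h'.trans huv).le
      have htu : t - u < 0 := by linarith
      have hvu : (0:ℝ) < v - u := by linarith
      have h2 := mul_le_mul_of_nonpos_right hsec htu.le
      rw [div_mul_cancel₀ _ (by linarith : t - u ≠ 0)] at h2
      have h4 := mul_le_mul_of_nonneg_left h2 hvu.le
      rw [show (v-u) * ((f v - f u)/(v-u) * (t-u)) = (f v - f u) * (t - u) by
        first | (field_simp; ring) | field_simp] at h4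
      nlinarith [h4]
  · rcases eq_or_lt_of_le h with rfl | h'
    · linarith
    · have hsec := hf.secant_mono hu hv ht huv.ne' (huv.trans h').ne' h'.le
      rw [div_le_div_iff₀ (by linarith) (by linarith)] at hsec
      nlinarith [hsec]

lemma convexOn_rpow_nonpos {p : ℝ} (hp : p ≤ 0) :
    ConvexOn ℝ (Set.Ioi (0:ℝ)) fun t : ℝ => t ^ p := by
  refine convexOn_of_hasDerivWithinAt2_nonneg (f' := fun x => p * x ^ (p-1))
    (f'' := fun x => p * (p-1) * x ^ (p-2)) (convex_Ioi 0) ?_ ?_ ?_ ?_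
  · intro x hx
    exact (Real.continuousAt_rpow_const x p (Or.inl (ne_of_gt hx))).continuousWithinAt
  · intro x hx
    rw [interior_Ioi] at hx
    exact (Real.hasDerivAt_rpow_const (Or.inl hx.ne')).hasDerivWithinAt
  · intro x hx
    rw [interior_Ioi] at hx
    have h := (Real.hasDerivAt_rpow_const (p := p - 1) (x := x) (Or.inl hx.ne')).const_mul p
    have he : p * ((p - 1) * x ^ (p - 1 - 1)) = p * (p - 1) * x ^ (p - 2) := by
      rw [show p - 1 - 1 = p - 2 by ring]; ring
    exact (he ▸ h).hasDerivWithinAt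
  · intro x hx
    rw [interior_Ioi] at hx
    have h1 : 0 ≤ p * (p - 1) := by nlinarith
    exact mul_nonneg h1 (Real.rpow_nonneg hx.le _)


lemma refined_mid {f : ℝ → ℝ} (hconv : ConvexOn ℝ (Set.Ioi (0:ℝ)) f) {m M x : ℝ}
    (hm : 0 < m) (hmM : m < M) (h1 : m ≤ x) (h2 : x ≤ M) :
    f x + ((f m + f M - 2 * f ((M + m) / 2)) / 2
        - (f m + f M - 2 * f ((M + m) / 2)) * (M - m)⁻¹ * |x - (M + m) / 2|)
      ≤ (f M - f m) / (M - m) * x + (f m - (f M - f m) / (M - m) * m) := by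
  have he : (0:ℝ) < M - m := by linarith
  have hc0 : (0:ℝ) < (M + m) / 2 := by linarith
  have hmc : m < (M + m) / 2 := by linarith
  have hcM : (M + m) / 2 < M := by linarith
  have key : (M - m) * f x
      + (f m + f M - 2 * f ((M + m) / 2)) * ((M - m) / 2 - |x - (M + m) / 2|)
      ≤ (M - x) * f m + (x - m) * f M := by
    rcases le_total x ((M + m) / 2) with hxc | hxc
    · rw [abs_of_nonpos (by linarith)]
      have hch := chord_upper hconv (mem_Ioi.mpr hm) (mem_Ioi.mpr hc0) hmc h1 hxc
      linarith [hch]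
    · rw [abs_of_nonneg (by linarith)]
      have hch := chord_upper hconv (mem_Ioi.mpr hc0) (mem_Ioi.mpr (by linarith : (0:ℝ) < M))
        hcM hxc h2
      linarith [hch]
  have e1 : f x + ((f m + f M - 2 * f ((M + m) / 2)) / 2
        - (f m + f M - 2 * f ((M + m) / 2)) * (M - m)⁻¹ * |x - (M + m) / 2|)
      = ((M - m) * f x
        + (f m + f M - 2 * f ((M + m) / 2)) * ((M - m) / 2 - |x - (M + m) / 2|)) / (M - m) := by
    field_simp
  have e2 : (f M - f m) / (M - m) * x + (f m - (f M - f m) / (M - m) * m)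
      = ((M - x) * f m + (x - m) * f M) / (M - m) := by
    field_simp
    ring
  rw [e1, e2]
  exact div_le_div_of_nonneg_right key he.le

lemma refined_outer {f : ℝ → ℝ} (hconv : ConvexOn ℝ (Set.Ioi (0:ℝ)) f) {m M x : ℝ}
    (hm : 0 < m) (hmM : m < M) (hx : 0 < x) (h : x ≤ m ∨ M ≤ x) :
    (f M - f m) / (M - m) * x + (f m - (f M - f m) / (M - m) * m) ≤ f x := by
  have he : (0:ℝ) < M - m := by linarith
  have hch := chord_lower hconv (mem_Ioi.mpr hm) (mem_Ioi.mpr (by linarith : (0:ℝ) < M))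
    (mem_Ioi.mpr hx) hmM h
  have e2 : (f M - f m) / (M - m) * x + (f m - (f M - f m) / (M - m) * m)
      = ((M - x) * f m + (x - m) * f M) / (M - m) := by
    field_simp
    ring
  rw [e2, div_le_iff₀ he]
  linarith [hch]

lemma delta_nonneg {f : ℝ → ℝ} (hconv : ConvexOn ℝ (Set.Ioi (0:ℝ)) f) {m M : ℝ}
    (hm : 0 < m) (hmM : m < M) :
    0 ≤ f m + f M - 2 * f ((M + m) / 2) := by
  have he : (0:ℝ) < M - m := by linarith
  have hch := chord_upper hconv (mem_Ioi.mpr hm) (mem_Ioi.mpr (by linarith : (0:ℝ) < M)) hmM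
    (by linarith : m ≤ (M + m) / 2) (by linarith : (M + m) / 2 ≤ M)
  have h2 : (M - m) * (2 * f ((M + m) / 2)) ≤ (M - m) * (f m + f M) := by linarith [hch]
  have := le_of_mul_le_mul_left h2 he
  linarith

/-- Corollary 3.8 of the paper: power functions. -/
theorem power_inequality_refined {H : Type*} [NormedAddCommGroup H]
    [InnerProductSpace ℂ H] [CompleteSpace H] (m M : ℝ) (hmM : m < M)
    (A B C D : H →L[ℂ] H)
    (hAsa : IsSelfAdjoint A) (hBsa : IsSelfAdjoint B)
    (hCsa : IsSelfAdjoint C) (hDsa : IsSelfAdjoint D)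
    (hIA : (1 : H →L[ℂ] H) ≤ A) (hA : A ≤ m • 1)
    (hBl : m • 1 ≤ B) (hBu : B ≤ M • 1)
    (hCl : m • 1 ≤ C) (hCu : C ≤ M • 1) (hD : M • 1 ≤ D)
    (p q : ℝ) (hpq : p ≤ q)
    (hcond : (B + C ≤ A + D ∧ 1 ≤ p) ∨ (A + D ≤ B + C ∧ p ≤ 0)) :
    opPow B p + opPow C p ≤
        opPow A q + opPow D q -
          (m ^ p + M ^ p - 2 * ((m + M) / 2) ^ p) •
            ((1 : H →L[ℂ] H) -
              (M - m)⁻¹ •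
                (opAbs (B - ((M + m) / 2) • 1) + opAbs (C - ((M + m) / 2) • 1))) ∧
      opPow A q + opPow D q -
          (m ^ p + M ^ p - 2 * ((m + M) / 2) ^ p) •
            ((1 : H →L[ℂ] H) -
              (M - m)⁻¹ •
                (opAbs (B - ((M + m) / 2) • 1) + opAbs (C - ((M + m) / 2) • 1))) ≤
        opPow A q + opPow D q := by
  rw [show ((m + M) / 2 : ℝ) = (M + m) / 2 from by ring]
  obtain hsing | hn := subsingleton_or_nontrivial H
  · exact ⟨le_of_eq (Subsingleton.elim _ _), le_of_eq (Subsingleton.elim _ _)⟩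
  -- Basic scalar facts
  have hm1 : (1:ℝ) ≤ m := by
    have h1 : (1 : H →L[ℂ] H) ≤ m • 1 := hIA.trans hA
    rw [← Algebra.algebraMap_eq_smul_one] at h1
    have h2 := (le_algebraMap_iff_spectrum_le (a := (1 : H →L[ℂ] H)) (r := m)
      (IsSelfAdjoint.one _)).mp h1
    refine h2 1 ?_
    rw [show spectrum ℝ (1 : H →L[ℂ] H) = {1} from spectrum.one_eq]
    rfl
  have hm0 : (0:ℝ) < m := by linarith
  have hMm : (0:ℝ) < M - m := by linarith
  -- Spectra
  have hBs : ∀ x ∈ spectrum ℝ B, m ≤ x ∧ x ≤ M := by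
    have h1 := hBl; have h2 := hBu
    rw [← Algebra.algebraMap_eq_smul_one] at h1 h2
    exact fun x hx => ⟨(algebraMap_le_iff_le_spectrum hBsa).mp h1 x hx,
      (le_algebraMap_iff_spectrum_le hBsa).mp h2 x hx⟩
  have hCs : ∀ x ∈ spectrum ℝ C, m ≤ x ∧ x ≤ M := by
    have h1 := hCl; have h2 := hCu
    rw [← Algebra.algebraMap_eq_smul_one] at h1 h2
    exact fun x hx => ⟨(algebraMap_le_iff_le_spectrum hCsa).mp h1 x hx,
      (le_algebraMap_iff_spectrum_le hCsa).mp h2 x hx⟩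
  have hAs : ∀ x ∈ spectrum ℝ A, 1 ≤ x ∧ x ≤ m := by
    have h1 := hIA; have h2 := hA
    rw [show (1 : H →L[ℂ] H) = algebraMap ℝ (H →L[ℂ] H) 1 from by simp] at h1
    rw [← Algebra.algebraMap_eq_smul_one] at h2
    exact fun x hx => ⟨(algebraMap_le_iff_le_spectrum hAsa).mp h1 x hx,
      (le_algebraMap_iff_spectrum_le hAsa).mp h2 x hx⟩
  have hDs : ∀ x ∈ spectrum ℝ D, M ≤ x := by
    have h1 := hD
    rw [← Algebra.algebraMap_eq_smul_one] at h1
    exact fun x hx => (algebraMap_le_iff_le_spectrum hDsa).mp h1 x hx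
  have hB1 : ∀ x ∈ spectrum ℝ B, (1:ℝ) ≤ x := fun x hx => hm1.trans (hBs x hx).1
  have hC1 : ∀ x ∈ spectrum ℝ C, (1:ℝ) ≤ x := fun x hx => hm1.trans (hCs x hx).1
  have hA1 : ∀ x ∈ spectrum ℝ A, (1:ℝ) ≤ x := fun x hx => (hAs x hx).1
  have hD1 : ∀ x ∈ spectrum ℝ D, (1:ℝ) ≤ x := fun x hx => by
    have := hDs x hx; linarith
  -- continuity of real powers on the spectra
  have hcont : ∀ (r : ℝ) (T : H →L[ℂ] H), (∀ x ∈ spectrum ℝ T, (1:ℝ) ≤ x) →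
      ContinuousOn (fun t : ℝ => t ^ r) (spectrum ℝ T) := by
    intro r T hT x hx
    exact (Real.continuousAt_rpow_const x r
      (Or.inl (by have := hT x hx; intro h0; rw [h0] at this; linarith))).continuousWithinAt
  -- convexity
  have hconv : ConvexOn ℝ (Set.Ioi (0:ℝ)) (fun t : ℝ => t ^ p) := by
    rcases hcond with ⟨_, hp⟩ | ⟨_, hp⟩
    · exact (convexOn_rpow hp).subset (fun x hx => mem_Ici.mpr (le_of_lt hx)) (convex_Ioi 0)
    · exact convexOn_rpow_nonpos hp
  have hδ0 : (0:ℝ) ≤ (m ^ p + M ^ p - 2 * ((M + m) / 2) ^ p) := delta_nonneg hconv hm0 hmM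
  -- opAbs as a cfc of the original operator
  have habs : ∀ (T : H →L[ℂ] H), IsSelfAdjoint T →
      opAbs (T - ((M + m) / 2) • 1) = cfc (fun t : ℝ => |t - ((M + m) / 2)|) T := by
    intro T hT
    have h1 : T - ((M + m) / 2) • 1 = cfc (fun t : ℝ => t - ((M + m) / 2)) T := by
      rw [cfc_sub (fun t : ℝ => t) (fun _ : ℝ => ((M + m) / 2)) T (by fun_prop) (by fun_prop),
        cfc_id' ℝ T, cfc_const ((M + m) / 2) T hT, Algebra.algebraMap_eq_smul_one]
    rw [opAbs, h1,
      ← cfc_comp' (fun t : ℝ => |t|) (fun t : ℝ => t - ((M + m) / 2)) T (by fun_prop) (by fun_prop) hT]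
  -- the affine function as an operator
  have hL : ∀ (T : H →L[ℂ] H), IsSelfAdjoint T →
      cfc (fun t : ℝ => ((M ^ p - m ^ p) / (M - m)) * t + (m ^ p - (M ^ p - m ^ p) / (M - m) * m)) T = ((M ^ p - m ^ p) / (M - m)) • T + (m ^ p - (M ^ p - m ^ p) / (M - m) * m) • 1 := by
    intro T hT
    rw [cfc_add (a := T) (f := fun t : ℝ => ((M ^ p - m ^ p) / (M - m)) * t) (g := fun _ : ℝ => (m ^ p - (M ^ p - m ^ p) / (M - m) * m))
        (by fun_prop) (by fun_prop),
      cfc_const_mul ((M ^ p - m ^ p) / (M - m)) (fun t : ℝ => t) T (by fun_prop), cfc_id' ℝ T,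
      cfc_const (m ^ p - (M ^ p - m ^ p) / (M - m) * m) T hT, Algebra.algebraMap_eq_smul_one]
  -- decomposition of the refined lower-bound function
  have hE : ∀ (T : H →L[ℂ] H), IsSelfAdjoint T → (∀ x ∈ spectrum ℝ T, (1:ℝ) ≤ x) →
      cfc (fun t : ℝ => t ^ p + (m ^ p + M ^ p - 2 * ((M + m) / 2) ^ p) / 2 - (m ^ p + M ^ p - 2 * ((M + m) / 2) ^ p) * (M - m)⁻¹ * |t - ((M + m) / 2)|) T
        = opPow T p + (((m ^ p + M ^ p - 2 * ((M + m) / 2) ^ p) / 2) • 1 - ((m ^ p + M ^ p - 2 * ((M + m) / 2) ^ p) * (M - m)⁻¹) • cfc (fun t : ℝ => |t - ((M + m) / 2)|) T) := by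
    intro T hT hT1
    rw [cfc_sub (fun t : ℝ => t ^ p + (m ^ p + M ^ p - 2 * ((M + m) / 2) ^ p) / 2)
        (fun t : ℝ => (m ^ p + M ^ p - 2 * ((M + m) / 2) ^ p) * (M - m)⁻¹ * |t - ((M + m) / 2)|) T
        ((hcont p T hT1).add continuousOn_const)
        (by fun_prop),
      cfc_add_const ((m ^ p + M ^ p - 2 * ((M + m) / 2) ^ p) / 2) (fun t : ℝ => t ^ p) T (hcont p T hT1) hT,
      cfc_const_mul ((m ^ p + M ^ p - 2 * ((M + m) / 2) ^ p) * (M - m)⁻¹) (fun t : ℝ => |t - ((M + m) / 2)|) T (by fun_prop),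
      Algebra.algebraMap_eq_smul_one, add_sub_assoc, opPow]
  -- key inequalities for B and C
  have keyB : opPow B p + (((m ^ p + M ^ p - 2 * ((M + m) / 2) ^ p) / 2) • 1 - ((m ^ p + M ^ p - 2 * ((M + m) / 2) ^ p) * (M - m)⁻¹) • cfc (fun t : ℝ => |t - ((M + m) / 2)|) B)
      ≤ ((M ^ p - m ^ p) / (M - m)) • B + (m ^ p - (M ^ p - m ^ p) / (M - m) * m) • 1 := by
    rw [← hE B hBsa hB1, ← hL B hBsa]
    refine cfc_mono (fun x hx => ?_) ?_ ?_
    · have h := refined_mid hconv hm0 hmM (hBs x hx).1 (hBs x hx).2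
      linarith [h]
    · exact ((hcont p B hB1).add continuousOn_const).sub
        ((by fun_prop : Continuous fun t : ℝ => (m ^ p + M ^ p - 2 * ((M + m) / 2) ^ p) * (M - m)⁻¹ * |t - ((M + m) / 2)|).continuousOn)
    · exact (by fun_prop : Continuous fun t : ℝ => ((M ^ p - m ^ p) / (M - m)) * t + (m ^ p - (M ^ p - m ^ p) / (M - m) * m)).continuousOn
  have keyC : opPow C p + (((m ^ p + M ^ p - 2 * ((M + m) / 2) ^ p) / 2) • 1 - ((m ^ p + M ^ p - 2 * ((M + m) / 2) ^ p) * (M - m)⁻¹) • cfc (fun t : ℝ => |t - ((M + m) / 2)|) C)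
      ≤ ((M ^ p - m ^ p) / (M - m)) • C + (m ^ p - (M ^ p - m ^ p) / (M - m) * m) • 1 := by
    rw [← hE C hCsa hC1, ← hL C hCsa]
    refine cfc_mono (fun x hx => ?_) ?_ ?_
    · have h := refined_mid hconv hm0 hmM (hCs x hx).1 (hCs x hx).2
      linarith [h]
    · exact ((hcont p C hC1).add continuousOn_const).sub
        ((by fun_prop : Continuous fun t : ℝ => (m ^ p + M ^ p - 2 * ((M + m) / 2) ^ p) * (M - m)⁻¹ * |t - ((M + m) / 2)|).continuousOn)
    · exact (by fun_prop : Continuous fun t : ℝ => ((M ^ p - m ^ p) / (M - m)) * t + (m ^ p - (M ^ p - m ^ p) / (M - m) * m)).continuousOn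
  -- key inequalities for A and D
  have hqA : ((M ^ p - m ^ p) / (M - m)) • A + (m ^ p - (M ^ p - m ^ p) / (M - m) * m) • 1 ≤ opPow A q := by
    rw [← hL A hAsa, opPow]
    refine cfc_mono (fun x hx => ?_) ?_ ?_
    · refine le_trans (refined_outer hconv hm0 hmM (by linarith [(hAs x hx).1])
        (Or.inl (hAs x hx).2)) ?_
      exact Real.rpow_le_rpow_of_exponent_le (hAs x hx).1 hpq
    · exact (by fun_prop : Continuous fun t : ℝ => ((M ^ p - m ^ p) / (M - m)) * t + (m ^ p - (M ^ p - m ^ p) / (M - m) * m)).continuousOn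
    · exact hcont q A hA1
  have hqD : ((M ^ p - m ^ p) / (M - m)) • D + (m ^ p - (M ^ p - m ^ p) / (M - m) * m) • 1 ≤ opPow D q := by
    rw [← hL D hDsa, opPow]
    refine cfc_mono (fun x hx => ?_) ?_ ?_
    · refine le_trans (refined_outer hconv hm0 hmM (by linarith [hD1 x hx])
        (Or.inr (hDs x hx))) ?_
      exact Real.rpow_le_rpow_of_exponent_le (hD1 x hx) hpq
    · exact (by fun_prop : Continuous fun t : ℝ => ((M ^ p - m ^ p) / (M - m)) * t + (m ^ p - (M ^ p - m ^ p) / (M - m) * m)).continuousOn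
    · exact hcont q D hD1
  -- comparison of the affine middle terms
  have hlin : ((M ^ p - m ^ p) / (M - m)) • B + (m ^ p - (M ^ p - m ^ p) / (M - m) * m) • 1 + (((M ^ p - m ^ p) / (M - m)) • C + (m ^ p - (M ^ p - m ^ p) / (M - m) * m) • 1)
      ≤ ((M ^ p - m ^ p) / (M - m)) • A + (m ^ p - (M ^ p - m ^ p) / (M - m) * m) • 1 + (((M ^ p - m ^ p) / (M - m)) • D + (m ^ p - (M ^ p - m ^ p) / (M - m) * m) • 1) := by
    have h0 : ((M ^ p - m ^ p) / (M - m)) • (B + C) ≤ ((M ^ p - m ^ p) / (M - m)) • (A + D) := by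
      rcases hcond with ⟨hord, hp⟩ | ⟨hord, hp⟩
      · refine smul_le_smul_of_nonneg_left hord ?_
        have : m ^ p ≤ M ^ p := Real.rpow_le_rpow (by linarith) hmM.le (by linarith)
        exact div_nonneg (by linarith) hMm.le
      · refine smul_le_smul_of_nonpos_left hord ?_
        have : M ^ p ≤ m ^ p := Real.rpow_le_rpow_of_nonpos hm0 hmM.le hp
        exact div_nonpos_iff.mpr (Or.inr ⟨by linarith, hMm.le⟩)
    calc ((M ^ p - m ^ p) / (M - m)) • B + (m ^ p - (M ^ p - m ^ p) / (M - m) * m) • 1 + (((M ^ p - m ^ p) / (M - m)) • C + (m ^ p - (M ^ p - m ^ p) / (M - m) * m) • 1)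
        = ((M ^ p - m ^ p) / (M - m)) • (B + C) + ((m ^ p - (M ^ p - m ^ p) / (M - m) * m) • 1 + (m ^ p - (M ^ p - m ^ p) / (M - m) * m) • 1) := by rw [smul_add]; abel
      _ ≤ ((M ^ p - m ^ p) / (M - m)) • (A + D) + ((m ^ p - (M ^ p - m ^ p) / (M - m) * m) • 1 + (m ^ p - (M ^ p - m ^ p) / (M - m) * m) • 1) := add_le_add_left h0 _
      _ = ((M ^ p - m ^ p) / (M - m)) • A + (m ^ p - (M ^ p - m ^ p) / (M - m) * m) • 1 + (((M ^ p - m ^ p) / (M - m)) • D + (m ^ p - (M ^ p - m ^ p) / (M - m) * m) • 1) := by rw [smul_add]; abel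
  have total : opPow B p + (((m ^ p + M ^ p - 2 * ((M + m) / 2) ^ p) / 2) • 1 - ((m ^ p + M ^ p - 2 * ((M + m) / 2) ^ p) * (M - m)⁻¹) • cfc (fun t : ℝ => |t - ((M + m) / 2)|) B)
      + (opPow C p + (((m ^ p + M ^ p - 2 * ((M + m) / 2) ^ p) / 2) • 1 - ((m ^ p + M ^ p - 2 * ((M + m) / 2) ^ p) * (M - m)⁻¹) • cfc (fun t : ℝ => |t - ((M + m) / 2)|) C))
      ≤ opPow A q + opPow D q :=
    (add_le_add keyB keyC).trans (hlin.trans (add_le_add hqA hqD))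
  constructor
  · rw [le_sub_iff_add_le]
    have hre : opPow B p + opPow C p
        + (m ^ p + M ^ p - 2 * ((M + m) / 2) ^ p) • ((1 : H →L[ℂ] H)
          - (M - m)⁻¹ • (opAbs (B - ((M + m) / 2) • 1) + opAbs (C - ((M + m) / 2) • 1)))
        = opPow B p + (((m ^ p + M ^ p - 2 * ((M + m) / 2) ^ p) / 2) • 1 - ((m ^ p + M ^ p - 2 * ((M + m) / 2) ^ p) * (M - m)⁻¹) • cfc (fun t : ℝ => |t - ((M + m) / 2)|) B)
          + (opPow C p + (((m ^ p + M ^ p - 2 * ((M + m) / 2) ^ p) / 2) • 1 - ((m ^ p + M ^ p - 2 * ((M + m) / 2) ^ p) * (M - m)⁻¹) • cfc (fun t : ℝ => |t - ((M + m) / 2)|) C)) := by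
      rw [habs B hBsa, habs C hCsa]
      module
    rw [hre]
    exact total
  · have habsB : cfc (fun t : ℝ => |t - ((M + m) / 2)|) B ≤ ((M - m) / 2) • 1 := by
      rw [← Algebra.algebraMap_eq_smul_one]
      refine cfc_le_algebraMap _ _ _ (fun x hx => ?_) (by fun_prop) hBsa
      have := hBs x hx
      rw [abs_le]
      constructor <;> [linarith [this.1]; linarith [this.2]]
    have habsC : cfc (fun t : ℝ => |t - ((M + m) / 2)|) C ≤ ((M - m) / 2) • 1 := by
      rw [← Algebra.algebraMap_eq_smul_one]
      refine cfc_le_algebraMap _ _ _ (fun x hx => ?_) (by fun_prop) hCsa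
      have := hCs x hx
      rw [abs_le]
      constructor <;> [linarith [this.1]; linarith [this.2]]
    have hXt : (0 : H →L[ℂ] H) ≤ (1 : H →L[ℂ] H)
        - (M - m)⁻¹ • (opAbs (B - ((M + m) / 2) • 1) + opAbs (C - ((M + m) / 2) • 1)) := by
      rw [sub_nonneg, habs B hBsa, habs C hCsa]
      calc (M - m)⁻¹ • (cfc (fun t : ℝ => |t - ((M + m) / 2)|) B + cfc (fun t : ℝ => |t - ((M + m) / 2)|) C)
          ≤ (M - m)⁻¹ • (((M - m) / 2) • 1 + ((M - m) / 2) • 1) :=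
            smul_le_smul_of_nonneg_left (add_le_add habsB habsC) (by positivity)
        _ = (1 : H →L[ℂ] H) := by
            rw [← add_smul, show ((M - m) / 2 + (M - m) / 2 : ℝ) = M - m from by ring,
              smul_smul, inv_mul_cancel₀ hMm.ne', one_smul]
    have hfinal : (0 : H →L[ℂ] H) ≤ (m ^ p + M ^ p - 2 * ((M + m) / 2) ^ p) • ((1 : H →L[ℂ] H)
        - (M - m)⁻¹ • (opAbs (B - ((M + m) / 2) • 1) + opAbs (C - ((M + m) / 2) • 1))) := by
      have := smul_le_smul_of_nonneg_left hXt hδ0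
      simpa using this
    exact sub_le_self _ hfinal
end
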